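/- arXiv:1304.6233 — 2 statements merged into one kernel-verified Lean document; each statement's English description precedes it below -/
import Mathlib

section
/- The minimum value of rank(Z) + rank(L) over all pairs of square matrices (Z, L) satisfying X = X Z + L X equals rank(X). Moreover, this minimum is attained at (Z, L) = (X† X, 0). -/
open Matrix

/-- The nuclear norm of a real matrix: the sum of its singular values,
i.e. the sum of the square roots of the eigenvalues of `Aᵀ * A`. -/
noncomputable def nuclearNorm {m n : Type*} [Fintype m] [Fintype n] [DecidableEq n]
    (A : Matrix m n ℝ) : ℝ :=
  ∑ i, Real.sqrt ((show (Aᵀ * A).IsHermitian by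
    simpa using Matrix.isHermitian_conjTranspose_mul_self A).eigenvalues i)

/-- `P` is the Moore–Penrose pseudo-inverse of `X`. -/
def IsMoorePenroseInv {m n : Type*} [Fintype m] [Fintype n]
    (X : Matrix m n ℝ) (P : Matrix n m ℝ) : Prop :=
  X * P * X = X ∧ P * X * P = P ∧ (X * P)ᵀ = X * P ∧ (P * X)ᵀ = P * X

/-- `(U, σ, V)` is a skinny SVD of `X`: `U` and `V` have orthonormal columns,
`σ` lists the (positive) nonzero singular values, `X = U * diagonal σ * Vᵀ`,
and the number of columns of `U` and `V` is `rank X`. -/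
def IsSkinnySVD {m n r : ℕ} (X : Matrix (Fin m) (Fin n) ℝ)
    (U : Matrix (Fin m) (Fin r) ℝ) (σ : Fin r → ℝ) (V : Matrix (Fin n) (Fin r) ℝ) : Prop :=
  Uᵀ * U = 1 ∧ Vᵀ * V = 1 ∧ (∀ i, 0 < σ i) ∧
    X = U * Matrix.diagonal σ * Vᵀ ∧ r = X.rank

lemma matrix_rank_add_le {m n : ℕ} (A B : Matrix (Fin m) (Fin n) ℝ) :
    (A + B).rank ≤ A.rank + B.rank := by
  simp only [Matrix.rank]
  have h : LinearMap.range (A + B).mulVecLin ≤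
      LinearMap.range A.mulVecLin ⊔ LinearMap.range B.mulVecLin := by
    rintro x ⟨v, rfl⟩
    exact Submodule.mem_sup.2 ⟨A.mulVecLin v, ⟨v, rfl⟩, B.mulVecLin v, ⟨v, rfl⟩, by
      simp [Matrix.add_mulVec]⟩
  exact (Submodule.finrank_mono h).trans
    (Submodule.finrank_add_le_finrank_add_finrank _ _)

/-- The minimum of `rank Z + rank L` subject to `X = X Z + L X` equals `rank X`,
attained at `(Z, L) = (X† X, 0)`. -/
theorem stmt2 {m n : ℕ} (X : Matrix (Fin m) (Fin n) ℝ) (hX : X ≠ 0)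
    (P : Matrix (Fin n) (Fin m) ℝ) (hP : IsMoorePenroseInv X P) :
    IsLeast {k : ℕ | ∃ (Z : Matrix (Fin n) (Fin n) ℝ) (L : Matrix (Fin m) (Fin m) ℝ),
        X = X * Z + L * X ∧ Z.rank + L.rank = k} X.rank ∧
    X = X * (P * X) + (0 : Matrix (Fin m) (Fin m) ℝ) * X ∧
    (P * X).rank + (0 : Matrix (Fin m) (Fin m) ℝ).rank = X.rank := by
  obtain ⟨h1, h2, h3, h4⟩ := hP
  have heq : X = X * (P * X) + (0 : Matrix (Fin m) (Fin m) ℝ) * X := by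
    rw [Matrix.zero_mul, add_zero, ← Matrix.mul_assoc, h1]
  have hrankPX : (P * X).rank = X.rank := by
    apply le_antisymm (Matrix.rank_mul_le_right P X)
    calc X.rank = (X * (P * X)).rank := by rw [← Matrix.mul_assoc, h1]
      _ ≤ (P * X).rank := Matrix.rank_mul_le_right _ _
  refine ⟨⟨⟨P * X, 0, heq, by simp [hrankPX]⟩, ?_⟩, heq, by simp [hrankPX]⟩
  rintro k ⟨Z, L, hZL, rfl⟩
  calc X.rank = (X * Z + L * X).rank := by rw [← hZL]
    _ ≤ (X * Z).rank + (L * X).rank := matrix_rank_add_le _ _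
    _ ≤ Z.rank + L.rank :=
        add_le_add (Matrix.rank_mul_le_right _ _) (Matrix.rank_mul_le_left _ _)
end

section
/- Let Ŵ be a matrix of size rank(X) that is block diagonal compatibly with Σ_X (i.e., [Ŵ]_{ij} = 0 whenever [Σ_X]_{ii} ≠ [Σ_X]_{jj}), with both Ŵ and I − Ŵ symmetric positive semi-definite, and suppose Ŵ is not idempotent. Then the pair (Z*, L*) = (V_X Ŵ V_Xᵀ, U_X (I − Ŵ) U_Xᵀ) is an optimal solution to the heuristic LatLRR problem (minimize ‖Z‖_* + ‖L‖_* subject to X = X Z + L X) but is not an optimal solution to the original LatLRR problem (minimize rank(Z) + rank(L) subject to X = X Z + L X). -/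
open Matrix

section LatLRRHelpers

private lemma eig_congr {N : ℕ} {A B : Matrix (Fin N) (Fin N) ℝ} (hAB : A = B)
    (hA : A.IsHermitian) (hB : B.IsHermitian) : hA.eigenvalues = hB.eigenvalues := by
  subst hAB; rfl

private lemma trace_sqrt {N : ℕ} {H : Matrix (Fin N) (Fin N) ℝ} (hH : H.PosSemidef) :
    (hH.1.cfc Real.sqrt).trace = ∑ i, Real.sqrt (hH.1.eigenvalues i) := by
  rw [Matrix.IsHermitian.cfc, Unitary.conjStarAlgAut_apply, Matrix.trace_mul_cycle,
    Unitary.coe_star_mul_self, Matrix.one_mul, Matrix.trace_diagonal]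
  simp [RCLike.ofReal_real_eq_id]

private lemma nuclearNorm_psd {N : ℕ} {S : Matrix (Fin N) (Fin N) ℝ} (hS : S.PosSemidef) :
    nuclearNorm S = S.trace := by
  have hT : Sᵀ * S = S ^ 2 := by
    rw [pow_two]
    congr 1
    rw [← conjTranspose_eq_transpose_of_trivial, hS.1]
  have h2 : (S ^ 2).PosSemidef := hS.pow 2
  have hsq : h2.1.cfc Real.sqrt = S := by
    rw [← h2.1.cfc_eq]
    refine (cfc_comp_pow Real.sqrt 2 S Real.continuous_sqrt.continuousOn hS.1.isSelfAdjoint).symm.trans ?_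
    have : (spectrum ℝ S).EqOn (fun x => Real.sqrt (x ^ 2)) id := by
      intro x hx
      obtain ⟨i, rfl⟩ := hS.1.spectrum_real_eq_range_eigenvalues ▸ hx
      simp [Real.sqrt_sq (hS.eigenvalues_nonneg i)]
    rw [cfc_congr this, cfc_id ℝ S hS.1.isSelfAdjoint]
  unfold nuclearNorm
  rw [eig_congr hT (show (Sᵀ * S).IsHermitian by
    simpa using Matrix.isHermitian_conjTranspose_mul_self S) h2.1, ← trace_sqrt h2,
    hsq]

private lemma dot_self_nonneg' {N : ℕ} (a : Fin N → ℝ) : 0 ≤ a ⬝ᵥ a :=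
  Finset.sum_nonneg fun i _ => mul_self_nonneg (a i)

private lemma dot_le_sqrt {N : ℕ} (a b : Fin N → ℝ) :
    a ⬝ᵥ b ≤ Real.sqrt (a ⬝ᵥ a) * Real.sqrt (b ⬝ᵥ b) := by
  have h := Finset.sum_mul_sq_le_sq_mul_sq Finset.univ a b
  calc a ⬝ᵥ b ≤ |a ⬝ᵥ b| := le_abs_self _
    _ = Real.sqrt ((a ⬝ᵥ b) ^ 2) := (Real.sqrt_sq_eq_abs _).symm
    _ ≤ Real.sqrt ((a ⬝ᵥ a) * (b ⬝ᵥ b)) := Real.sqrt_le_sqrt (by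
        simpa [dotProduct, pow_two, Finset.mul_sum] using h)
    _ = _ := Real.sqrt_mul (dot_self_nonneg' a) _

private lemma conj_diag_entry {N : ℕ} (Q M : Matrix (Fin N) (Fin N) ℝ) (i : Fin N) :
    (Qᵀ * M * Q) i i = (fun k => Q k i) ⬝ᵥ (M *ᵥ fun k => Q k i) := by
  simp only [Matrix.mul_apply, Matrix.transpose_apply, dotProduct, Matrix.mulVec,
    Finset.sum_mul, Finset.mul_sum]
  rw [Finset.sum_comm]
  apply Finset.sum_congr rfl; intro k _
  apply Finset.sum_congr rfl; intro l _
  ring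

private lemma trace_conj_le_nuclearNorm {n r : ℕ} (V : Matrix (Fin n) (Fin r) ℝ)
    (hV : Vᵀ * V = 1) (Z : Matrix (Fin n) (Fin n) ℝ) :
    (Vᵀ * Z * V).trace ≤ nuclearNorm Z := by
  classical
  set h := (show (Zᵀ * Z).IsHermitian by
    simpa using Matrix.isHermitian_conjTranspose_mul_self Z) with hh
  set Q : Matrix (Fin n) (Fin n) ℝ := (h.eigenvectorUnitary : Matrix (Fin n) (Fin n) ℝ)
    with hQdef
  have hQs : Qᵀ = star Q := by
    rw [Matrix.star_eq_conjTranspose, conjTranspose_eq_transpose_of_trivial]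
  have hQQ : Qᵀ * Q = 1 := by
    rw [hQs, hQdef, ← Unitary.coe_star]; exact Unitary.coe_star_mul_self _
  have hQQ' : Q * Qᵀ = 1 := by
    rw [hQs, hQdef, ← Unitary.coe_star]; exact Unitary.coe_mul_star_self _
  set P := V * Vᵀ with hP
  have hPt : Pᵀ = P := by simp [hP, Matrix.transpose_mul]
  have hPP : P * P = P := by
    rw [hP, Matrix.mul_assoc, ← Matrix.mul_assoc Vᵀ V Vᵀ, hV, Matrix.one_mul]
  have hcol : ∀ i, (fun k => Q k i) = ⇑(h.eigenvectorBasis i) := by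
    intro i; funext k; rw [hQdef]; exact h.eigenvectorUnitary_apply k i
  have heig : ∀ i, (Zᵀ * Z) *ᵥ (fun k => Q k i) = h.eigenvalues i • (fun k => Q k i) := by
    intro i; rw [hcol i]; exact h.mulVec_eigenvectorBasis i
  have hunit : ∀ i, (fun k => Q k i) ⬝ᵥ (fun k => Q k i) = 1 := by
    intro i
    have := congrFun (congrFun hQQ i) i
    simpa [Matrix.mul_apply, Matrix.one_apply, dotProduct] using this
  have h1 : (Vᵀ * Z * V).trace = (Qᵀ * (P * Z) * Q).trace := by
    rw [Matrix.trace_mul_cycle Vᵀ Z V]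
    rw [Matrix.trace_mul_cycle Qᵀ (P * Z) Q, ← Matrix.mul_assoc, hQQ', Matrix.one_mul, hP]
  rw [h1, Matrix.trace]
  unfold nuclearNorm
  apply Finset.sum_le_sum
  intro i _
  set q : Fin n → ℝ := fun k => Q k i with hq
  have hZq : (Z *ᵥ q) ⬝ᵥ (Z *ᵥ q) = h.eigenvalues i := by
    rw [Matrix.dotProduct_mulVec, ← Matrix.mulVec_transpose, Matrix.mulVec_mulVec, heig i]
    simp [smul_dotProduct, hunit i]
    rw [show (fun k => Q k i) ⬝ᵥ q = 1 from hunit i, mul_one]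
  have hPq : (P *ᵥ q) ⬝ᵥ (P *ᵥ q) ≤ 1 := by
    have hcnn : 0 ≤ (P *ᵥ q) ⬝ᵥ (P *ᵥ q) := dot_self_nonneg' _
    have hle : (P *ᵥ q) ⬝ᵥ (P *ᵥ q) ≤ Real.sqrt ((P *ᵥ q) ⬝ᵥ (P *ᵥ q)) := by
      calc (P *ᵥ q) ⬝ᵥ (P *ᵥ q) = (P *ᵥ q) ⬝ᵥ q := by
            conv_lhs => rw [Matrix.dotProduct_mulVec, ← Matrix.mulVec_transpose, hPt,
              Matrix.mulVec_mulVec, hPP]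
        _ ≤ Real.sqrt ((P *ᵥ q) ⬝ᵥ (P *ᵥ q)) * Real.sqrt (q ⬝ᵥ q) := dot_le_sqrt _ _
        _ = Real.sqrt ((P *ᵥ q) ⬝ᵥ (P *ᵥ q)) := by rw [hunit i, Real.sqrt_one, mul_one]
    nlinarith [Real.sq_sqrt hcnn, Real.sqrt_nonneg ((P *ᵥ q) ⬝ᵥ (P *ᵥ q)), hle]
  have hterm : (Qᵀ * (P * Z) * Q).diag i ≤ Real.sqrt (h.eigenvalues i) := by
    rw [Matrix.diag_apply, conj_diag_entry, ← Matrix.mulVec_mulVec,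
      Matrix.dotProduct_mulVec, ← Matrix.mulVec_transpose, hPt]
    calc (P *ᵥ q) ⬝ᵥ (Z *ᵥ q)
        ≤ Real.sqrt ((P *ᵥ q) ⬝ᵥ (P *ᵥ q)) * Real.sqrt ((Z *ᵥ q) ⬝ᵥ (Z *ᵥ q)) := dot_le_sqrt _ _
      _ ≤ 1 * Real.sqrt (h.eigenvalues i) := by
          rw [hZq]
          apply mul_le_mul_of_nonneg_right _ (Real.sqrt_nonneg _)
          exact Real.sqrt_le_one.mpr hPq
      _ = Real.sqrt (h.eigenvalues i) := one_mul _
  exact hterm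

private lemma rank_conj_eq {n r : ℕ} (V : Matrix (Fin n) (Fin r) ℝ) (hV : Vᵀ * V = 1)
    (A : Matrix (Fin r) (Fin r) ℝ) : (V * A * Vᵀ).rank = A.rank := by
  apply le_antisymm
  · exact le_trans (Matrix.rank_mul_le_left _ _) (Matrix.rank_mul_le_right _ _)
  · have hid : Vᵀ * (V * A * Vᵀ) * V = A := by
      have h1 : Vᵀ * (V * A * Vᵀ) * V = Vᵀ * V * (A * (Vᵀ * V)) := by
        simp only [Matrix.mul_assoc]
      rw [h1, hV, Matrix.one_mul, Matrix.mul_one]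
    calc A.rank = (Vᵀ * (V * A * Vᵀ) * V).rank := by rw [hid]
      _ ≤ (Vᵀ * (V * A * Vᵀ)).rank := Matrix.rank_mul_le_left _ _
      _ ≤ (V * A * Vᵀ).rank := Matrix.rank_mul_le_right _ _

private lemma spectral_real {N : ℕ} {A : Matrix (Fin N) (Fin N) ℝ} (hA : A.IsHermitian) :
    A = (hA.eigenvectorUnitary : Matrix (Fin N) (Fin N) ℝ) * diagonal hA.eigenvalues *
      (hA.eigenvectorUnitary : Matrix (Fin N) (Fin N) ℝ)ᵀ := by
  have h1 : (RCLike.ofReal ∘ hA.eigenvalues : Fin N → ℝ) = hA.eigenvalues := by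
    funext i; simp [RCLike.ofReal_real_eq_id]
  have h2 : star (hA.eigenvectorUnitary : Matrix (Fin N) (Fin N) ℝ) =
      (hA.eigenvectorUnitary : Matrix (Fin N) (Fin N) ℝ)ᵀ := by
    rw [Matrix.star_eq_conjTranspose, conjTranspose_eq_transpose_of_trivial]
  conv_lhs => rw [hA.spectral_theorem, Unitary.conjStarAlgAut_apply, h1, h2]

private lemma ug_t_mul {N : ℕ} (U : Matrix.unitaryGroup (Fin N) ℝ) :
    (U : Matrix (Fin N) (Fin N) ℝ)ᵀ * U = 1 := by
  have h : ((U : Matrix (Fin N) (Fin N) ℝ))ᵀ = star (U : Matrix (Fin N) (Fin N) ℝ) := by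
    rw [Matrix.star_eq_conjTranspose, conjTranspose_eq_transpose_of_trivial]
  rw [h, ← Unitary.coe_star]
  exact Unitary.coe_star_mul_self _

private lemma ug_mul_t {N : ℕ} (U : Matrix.unitaryGroup (Fin N) ℝ) :
    (U : Matrix (Fin N) (Fin N) ℝ) * (U : Matrix (Fin N) (Fin N) ℝ)ᵀ = 1 := by
  have h : ((U : Matrix (Fin N) (Fin N) ℝ))ᵀ = star (U : Matrix (Fin N) (Fin N) ℝ) := by
    rw [Matrix.star_eq_conjTranspose, conjTranspose_eq_transpose_of_trivial]
  rw [h, ← Unitary.coe_star]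
  exact Unitary.coe_mul_star_self _

end LatLRRHelpers

/-- If `Ŵ` is block diagonal compatibly with `Σ_X`, both `Ŵ` and `I − Ŵ` are
symmetric positive semi-definite, and `Ŵ` is not idempotent, then
`(V_X Ŵ V_Xᵀ, U_X (I − Ŵ) U_Xᵀ)` is optimal for the heuristic LatLRR problem but
not for the original (rank) LatLRR problem. -/
theorem stmt16 {m n r : ℕ} (X : Matrix (Fin m) (Fin n) ℝ) (hX : X ≠ 0)
    (UX : Matrix (Fin m) (Fin r) ℝ) (σX : Fin r → ℝ) (VX : Matrix (Fin n) (Fin r) ℝ)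
    (hsvd : IsSkinnySVD X UX σX VX)
    (W : Matrix (Fin r) (Fin r) ℝ)
    (hblock : ∀ i j, σX i ≠ σX j → W i j = 0)
    (hpsd : W.PosSemidef) (hpsd' : (1 - W).PosSemidef)
    (hnid : W * W ≠ W) :
    (X = X * (VX * W * VXᵀ) + (UX * (1 - W) * UXᵀ) * X ∧
      ∀ (Z : Matrix (Fin n) (Fin n) ℝ) (L : Matrix (Fin m) (Fin m) ℝ),
        X = X * Z + L * X →
          nuclearNorm (VX * W * VXᵀ) + nuclearNorm (UX * (1 - W) * UXᵀ)
            ≤ nuclearNorm Z + nuclearNorm L) ∧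
    ¬ (∀ (Z : Matrix (Fin n) (Fin n) ℝ) (L : Matrix (Fin m) (Fin m) ℝ),
        X = X * Z + L * X →
          (VX * W * VXᵀ).rank + (UX * (1 - W) * UXᵀ).rank ≤ Z.rank + L.rank) := by
  classical
  obtain ⟨hU, hV, hσ, hXdef, hr⟩ := hsvd
  set D := Matrix.diagonal σX with hD
  have hUcan : ∀ {k : ℕ} (M : Matrix (Fin r) (Fin k) ℝ), UXᵀ * (UX * M) = M := by
    intro k M; rw [← Matrix.mul_assoc, hU, Matrix.one_mul]
  have hVcan : ∀ {k : ℕ} (M : Matrix (Fin r) (Fin k) ℝ), VXᵀ * (VX * M) = M := by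
    intro k M; rw [← Matrix.mul_assoc, hV, Matrix.one_mul]
  have hcomm : D * W = W * D := by
    ext i j
    rw [hD, Matrix.diagonal_mul, Matrix.mul_diagonal]
    rcases eq_or_ne (σX i) (σX j) with h | h
    · rw [h, mul_comm]
    · rw [hblock i j h, mul_zero, zero_mul]
  -- feasibility
  have e1 : UX * D * VXᵀ * (VX * W * VXᵀ) = UX * (D * W) * VXᵀ := by
    simp only [Matrix.mul_assoc]
    rw [hVcan]
  have e2 : (UX * (1 - W) * UXᵀ) * (UX * D * VXᵀ) = UX * ((1 - W) * D) * VXᵀ := by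
    simp only [Matrix.mul_assoc]
    rw [hUcan]
  have e3 : D * W + (1 - W) * D = D := by
    rw [Matrix.sub_mul, Matrix.one_mul, hcomm]; abel
  have hfeas : X = X * (VX * W * VXᵀ) + (UX * (1 - W) * UXᵀ) * X := by
    conv_rhs => rw [hXdef]
    rw [e1, e2, ← Matrix.add_mul, ← Matrix.mul_add, e3, ← hXdef]
  -- value of the objective at the candidate
  have hpsd1 : (VX * W * VXᵀ).PosSemidef := by
    have h := hpsd.mul_mul_conjTranspose_same VX
    rwa [conjTranspose_eq_transpose_of_trivial] at h
  have hpsd2 : (UX * (1 - W) * UXᵀ).PosSemidef := by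
    have h := hpsd'.mul_mul_conjTranspose_same UX
    rwa [conjTranspose_eq_transpose_of_trivial] at h
  have hval : nuclearNorm (VX * W * VXᵀ) + nuclearNorm (UX * (1 - W) * UXᵀ) = (r : ℝ) := by
    rw [nuclearNorm_psd hpsd1, nuclearNorm_psd hpsd2,
      Matrix.trace_mul_cycle VX W VXᵀ, hV, Matrix.one_mul,
      Matrix.trace_mul_cycle UX (1 - W) UXᵀ, hU, Matrix.one_mul,
      ← Matrix.trace_add]
    have hWW : W + (1 - W) = (1 : Matrix (Fin r) (Fin r) ℝ) := by abel
    rw [hWW, Matrix.trace_one]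
    simp
  -- lower bound for any feasible pair
  have hub : ∀ (Z : Matrix (Fin n) (Fin n) ℝ) (L : Matrix (Fin m) (Fin m) ℝ),
      X = X * Z + L * X → (r : ℝ) ≤ nuclearNorm Z + nuclearNorm L := by
    intro Z L hZL
    have hUXX : UXᵀ * X = D * VXᵀ := by
      calc UXᵀ * X = UXᵀ * (UX * (D * VXᵀ)) := by rw [hXdef, Matrix.mul_assoc]
        _ = D * VXᵀ := hUcan _
    have hXV : X * VX = UX * D := by
      rw [hXdef]; simp only [Matrix.mul_assoc]; rw [hV, Matrix.mul_one]
    have h0 : UXᵀ * X * VX = D := by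
      rw [hUXX, Matrix.mul_assoc, hV, Matrix.mul_one]
    have hkey : D = D * (VXᵀ * Z * VX) + (UXᵀ * L * UX) * D := by
      calc D = UXᵀ * X * VX := h0.symm
        _ = UXᵀ * (X * Z + L * X) * VX := by rw [← hZL]
        _ = UXᵀ * (X * Z) * VX + UXᵀ * (L * X) * VX := by
            rw [Matrix.mul_add, Matrix.add_mul]
        _ = D * (VXᵀ * Z * VX) + (UXᵀ * L * UX) * D := by
            congr 1
            · rw [← Matrix.mul_assoc UXᵀ X Z, hUXX]
              simp only [Matrix.mul_assoc]
              try rfl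
            · simp only [Matrix.mul_assoc]
              rw [hXV]
    set Dinv := Matrix.diagonal (fun i => (σX i)⁻¹) with hDinvdef
    have hDiD : Dinv * D = 1 := by
      rw [hDinvdef, hD, Matrix.diagonal_mul_diagonal, ← Matrix.diagonal_one]
      have hf : (fun i => (σX i)⁻¹ * σX i) = fun _ : Fin r => (1 : ℝ) := by
        funext i; exact inv_mul_cancel₀ (ne_of_gt (hσ i))
      rw [hf]
    have hDDi : D * Dinv = 1 := by
      rw [hDinvdef, hD, Matrix.diagonal_mul_diagonal, ← Matrix.diagonal_one]
      have hf : (fun i => σX i * (σX i)⁻¹) = fun _ : Fin r => (1 : ℝ) := by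
        funext i; exact mul_inv_cancel₀ (ne_of_gt (hσ i))
      rw [hf]
    have hone : (1 : Matrix (Fin r) (Fin r) ℝ)
        = (VXᵀ * Z * VX) + Dinv * ((UXᵀ * L * UX) * D) := by
      calc (1 : Matrix (Fin r) (Fin r) ℝ) = Dinv * D := hDiD.symm
        _ = Dinv * (D * (VXᵀ * Z * VX) + (UXᵀ * L * UX) * D) := by rw [← hkey]
        _ = Dinv * (D * (VXᵀ * Z * VX)) + Dinv * ((UXᵀ * L * UX) * D) :=
            Matrix.mul_add _ _ _
        _ = (VXᵀ * Z * VX) + Dinv * ((UXᵀ * L * UX) * D) := by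
            rw [← Matrix.mul_assoc, hDiD, Matrix.one_mul]
    have htr := congrArg Matrix.trace hone
    rw [Matrix.trace_add, Matrix.trace_one] at htr
    have htr2 : (Dinv * ((UXᵀ * L * UX) * D)).trace = (UXᵀ * L * UX).trace := by
      rw [Matrix.trace_mul_comm, Matrix.mul_assoc, hDDi, Matrix.mul_one]
    rw [htr2] at htr
    have hb1 := trace_conj_le_nuclearNorm VX hV Z
    have hb2 := trace_conj_le_nuclearNorm UX hU L
    calc (r : ℝ) = (VXᵀ * Z * VX).trace + (UXᵀ * L * UX).trace := by
          rw [← htr]; simp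
      _ ≤ nuclearNorm Z + nuclearNorm L := add_le_add hb1 hb2
  refine ⟨⟨hfeas, fun Z L hZL => le_trans (le_of_eq hval) (hub Z L hZL)⟩, ?_⟩
  -- not rank-optimal
  intro hopt
  have hfeas0 : X = X * (VX * VXᵀ) + (0 : Matrix (Fin m) (Fin m) ℝ) * X := by
    rw [Matrix.zero_mul, add_zero]
    conv_rhs => rw [hXdef]
    simp only [Matrix.mul_assoc]
    rw [hVcan, ← Matrix.mul_assoc, ← hXdef]
  have hle := hopt _ _ hfeas0
  have hr1 : (VX * W * VXᵀ).rank = W.rank := rank_conj_eq VX hV W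
  have hr2 : (UX * (1 - W) * UXᵀ).rank = (1 - W).rank := rank_conj_eq UX hU (1 - W)
  have hr0 : (VX * VXᵀ).rank ≤ r :=
    le_trans (Matrix.rank_mul_le_left _ _) (Matrix.rank_le_width VX)
  set d := hpsd.1.eigenvalues with hd
  set Q := (hpsd.1.eigenvectorUnitary : Matrix (Fin r) (Fin r) ℝ) with hQ
  have hspec : W = Q * Matrix.diagonal d * Qᵀ := spectral_real hpsd.1
  have hQQ : Qᵀ * Q = 1 := ug_t_mul _
  have hQQ' : Q * Qᵀ = 1 := ug_mul_t _
  have hWrank : W.rank = Fintype.card {i // d i ≠ 0} := hpsd.1.rank_eq_card_non_zero_eigs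
  have hW2 : 1 - W = Q * Matrix.diagonal (fun i => 1 - d i) * Qᵀ := by
    have hdg : Matrix.diagonal (fun i : Fin r => 1 - d i)
        = 1 - Matrix.diagonal d := by
      rw [← Matrix.diagonal_one, ← Matrix.diagonal_sub]
    rw [hdg, Matrix.mul_sub, Matrix.sub_mul, Matrix.mul_one, hQQ', ← hspec]
  have hW2rank : (1 - W).rank = Fintype.card {i // d i ≠ 1} := by
    rw [hW2, rank_conj_eq Q hQQ, Matrix.rank_diagonal]
    exact Fintype.card_congr (Equiv.subtypeEquivRight (fun i => by
      rw [sub_ne_zero]; exact ne_comm))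
  have hex : ∃ i, d i ≠ 0 ∧ d i ≠ 1 := by
    by_contra hcon
    push_neg at hcon
    apply hnid
    have hdd : (fun i => d i * d i) = d := by
      funext i
      rcases eq_or_ne (d i) 0 with h | h
      · rw [h, mul_zero]
      · rw [hcon i h, mul_one]
    calc W * W = Q * (Matrix.diagonal d * (Qᵀ * (Q * (Matrix.diagonal d * Qᵀ)))) := by
          rw [hspec]; simp only [Matrix.mul_assoc]
      _ = Q * (Matrix.diagonal d * (Matrix.diagonal d * Qᵀ)) := by
          rw [← Matrix.mul_assoc Qᵀ Q _, hQQ, Matrix.one_mul]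
      _ = Q * ((Matrix.diagonal d * Matrix.diagonal d) * Qᵀ) := by
          simp only [Matrix.mul_assoc]
      _ = Q * (Matrix.diagonal d * Qᵀ) := by
          rw [Matrix.diagonal_mul_diagonal]
          congr 1
          rw [show (fun i => d i * d i) = d from hdd]
      _ = W := by rw [hspec, Matrix.mul_assoc]
  obtain ⟨i0, hi0, hi1⟩ := hex
  have hcards : r + 1 ≤ Fintype.card {i // d i ≠ 0} + Fintype.card {i // d i ≠ 1} := by
    rw [Fintype.card_subtype, Fintype.card_subtype]
    have hunion : (Finset.univ.filter (fun i => d i ≠ 0))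
        ∪ (Finset.univ.filter (fun i => d i ≠ 1)) = (Finset.univ : Finset (Fin r)) := by
      apply Finset.eq_univ_iff_forall.mpr
      intro i
      rcases eq_or_ne (d i) 0 with h | h
      · exact Finset.mem_union_right _ (by simp [h])
      · exact Finset.mem_union_left _ (by simp [h])
    have hinter : i0 ∈ (Finset.univ.filter (fun i => d i ≠ 0))
        ∩ (Finset.univ.filter (fun i => d i ≠ 1)) := by simp [hi0, hi1]
    have h := Finset.card_union_add_card_inter
      (Finset.univ.filter (fun i => d i ≠ 0)) (Finset.univ.filter (fun i => d i ≠ 1))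
    rw [hunion] at h
    have hpos : 1 ≤ ((Finset.univ.filter (fun i => d i ≠ 0))
        ∩ (Finset.univ.filter (fun i => d i ≠ 1))).card :=
      Finset.card_pos.mpr ⟨i0, hinter⟩
    have hcu : (Finset.univ : Finset (Fin r)).card = r := by simp
    omega
  rw [hr1, hr2, hWrank, hW2rank] at hle
  have hz : (0 : Matrix (Fin m) (Fin m) ℝ).rank = 0 := Matrix.rank_zero
  omega
end
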